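/- Let δ : ℤ → ℝ be a nonnegative sequence with finite support and define s : ℤ → ℝ by s_j = min(δ_{j−1}, δ_j). Then ∑_{j∈ℤ} (s_{j+1} − 2s_j + s_{j−1})² ≤ 2 ∑_{j∈ℤ} (δ_{j+1} − 2δ_j + δ_{j−1})². -/

import Mathlib

section aux

private lemma sdm_summable_of_finite {f : ℤ → ℝ} (h : (Function.support f).Finite) :
    Summable f :=
  summable_of_ne_finset_zero (s := h.toFinset)
    (fun b hb => Function.notMem_support.mp (fun H => hb (h.mem_toFinset.mpr H)))

private lemma sdm_shift_tsum (f : ℤ → ℝ) : ∑' j : ℤ, f (j - 1) = ∑' j : ℤ, f j :=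
  (Equiv.subRight (1 : ℤ)).tsum_eq f

end aux

theorem second_difference_min_estimate (δ : ℤ → ℝ) (hnn : ∀ j, 0 ≤ δ j)
    (hfin : (Function.support δ).Finite)
    (s : ℤ → ℝ) (hs : ∀ j, s j = min (δ (j - 1)) (δ j)) :
    ∑' j : ℤ, (s (j + 1) - 2 * s j + s (j - 1))^2 ≤
      2 * ∑' j : ℤ, (δ (j + 1) - 2 * δ j + δ (j - 1))^2 := by
  classical
  set g : ℤ → ℝ := fun j => δ j - δ (j - 1) with hgdef
  set Q : ℤ → ℝ := fun j => max (g j) 0 with hQdef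
  set M : ℤ → ℝ := fun j => max (-g j) 0 with hMdef
  set a : ℤ → ℝ := fun j => Q (j + 1) - Q j with hadef
  set c : ℤ → ℝ := fun j => M (j + 1) - M j with hcdef
  -- basic pointwise facts
  have hQnn : ∀ j, 0 ≤ Q j := fun j => le_max_right _ _
  have hMnn : ∀ j, 0 ≤ M j := fun j => le_max_right _ _
  have hQM : ∀ j, Q j * M j = 0 := by
    intro j
    simp only [hQdef, hMdef]
    rcases le_total (g j) 0 with h | h
    · rw [max_eq_right h]; ring
    · rw [max_eq_right (neg_nonpos.mpr h)]; ring
  have hQsubM : ∀ j, Q j - M j = g j := by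
    intro j
    simp only [hQdef, hMdef]
    rcases le_total (g j) 0 with h | h
    · rw [max_eq_right h, max_eq_left (neg_nonneg.mpr h)]; ring
    · rw [max_eq_left h, max_eq_right (neg_nonpos.mpr h)]; ring
  have hsM : ∀ j, s j = δ (j - 1) - M j := by
    intro j
    rw [hs j]
    simp only [hMdef, hgdef]
    rcases le_total (δ (j - 1)) (δ j) with h | h
    · rw [min_eq_left h, max_eq_right (by linarith)]; ring
    · rw [min_eq_right h, max_eq_left (by linarith)]; ring
  -- second difference identities
  have hkey1 : ∀ j : ℤ, s (j + 1) - 2 * s j + s (j - 1) = a (j - 1) - c j := by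
    intro j
    rw [hsM (j + 1), hsM j, hsM (j - 1)]
    simp only [hadef, hcdef, add_sub_cancel_right]
    have h1 : j - 1 + 1 = j := by ring
    rw [h1]
    have q1 := hQsubM j
    have q2 := hQsubM (j - 1)
    simp only [hgdef] at q1 q2
    linarith
  have hkey2 : ∀ j : ℤ, δ (j + 1) - 2 * δ j + δ (j - 1) = a j - c j := by
    intro j
    simp only [hadef, hcdef]
    have q1 := hQsubM (j + 1)
    have q2 := hQsubM j
    simp only [hgdef] at q1 q2
    simp only [add_sub_cancel_right] at q1
    linarith
  -- a j * c j ≤ 0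
  have hac : ∀ j : ℤ, a j * c j ≤ 0 := by
    intro j
    have h1 := hQM j
    have h2 := hQM (j + 1)
    have expand : a j * c j = -(Q (j + 1) * M j) - Q j * M (j + 1) := by
      simp only [hadef, hcdef]
      linear_combination h2 + h1
    rw [expand]
    nlinarith [mul_nonneg (hQnn (j + 1)) (hMnn j), mul_nonneg (hQnn j) (hMnn (j + 1))]
  -- finiteness of supports
  have hgfin : (Function.support g).Finite := by
    apply Set.Finite.subset (hfin.union (hfin.image (· + 1)))
    intro j hj
    by_contra hc
    simp only [Set.mem_union, Set.mem_image, Function.mem_support, not_or, not_exists,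
      not_and] at hc
    obtain ⟨h1, h2⟩ := hc
    have hd1 : δ j = 0 := by simpa using h1
    have hd2 : δ (j - 1) = 0 := by
      by_contra hd
      exact h2 (j - 1) hd (by ring)
    exact (Function.mem_support.mp hj) (by simp [hgdef, hd1, hd2])
  have hQfin : (Function.support Q).Finite := by
    apply hgfin.subset
    intro j hj
    simp only [Function.mem_support] at hj ⊢
    intro h
    exact hj (by simp [hQdef, h])
  have hMfin : (Function.support M).Finite := by
    apply hgfin.subset
    intro j hj
    simp only [Function.mem_support] at hj ⊢
    intro h
    exact hj (by simp [hMdef, h])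
  have hafin : (Function.support a).Finite := by
    apply Set.Finite.subset ((hQfin.image (· - 1)).union hQfin)
    intro j hj
    simp only [Function.mem_support, hadef] at hj
    by_contra hc
    simp only [Set.mem_union, Set.mem_image, Function.mem_support, not_or, not_exists,
      not_and] at hc
    obtain ⟨h1, h2⟩ := hc
    have hq1 : Q (j + 1) = 0 := by
      by_contra hq
      exact h1 (j + 1) hq (by ring)
    have hq2 : Q j = 0 := by simpa using h2
    exact hj (by rw [hq1, hq2]; ring)
  have hcfin : (Function.support c).Finite := by
    apply Set.Finite.subset ((hMfin.image (· - 1)).union hMfin)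
    intro j hj
    simp only [Function.mem_support, hcdef] at hj
    by_contra hc2
    simp only [Set.mem_union, Set.mem_image, Function.mem_support, not_or, not_exists,
      not_and] at hc2
    obtain ⟨h1, h2⟩ := hc2
    have hq1 : M (j + 1) = 0 := by
      by_contra hq
      exact h1 (j + 1) hq (by ring)
    have hq2 : M j = 0 := by simpa using h2
    exact hj (by rw [hq1, hq2]; ring)
  -- summability of the pieces
  have sub_sq : ∀ {f : ℤ → ℝ}, (Function.support f).Finite →
      (Function.support (fun j => (f j) ^ 2)).Finite := by
    intro f hf
    apply hf.subset
    intro j hj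
    simp only [Function.mem_support] at hj ⊢
    intro h; exact hj (by simp [h])
  have hsum_a2 : Summable (fun j : ℤ => (a j) ^ 2) := sdm_summable_of_finite (sub_sq hafin)
  have hsum_c2 : Summable (fun j : ℤ => (c j) ^ 2) := sdm_summable_of_finite (sub_sq hcfin)
  have hsum_a2s : Summable (fun j : ℤ => (a (j - 1)) ^ 2) :=
    ((Equiv.subRight (1 : ℤ)).summable_iff (f := fun j => (a j) ^ 2)).mpr hsum_a2
  have hsum_ac : Summable (fun j : ℤ => a j * c j) := by
    apply sdm_summable_of_finite
    apply hafin.subset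
    intro j hj
    simp only [Function.mem_support] at hj ⊢
    intro h; exact hj (by simp [h])
  have hsum_lhs : Summable (fun j : ℤ => (a (j - 1) - c j) ^ 2) := by
    apply sdm_summable_of_finite
    apply Set.Finite.subset ((hafin.image (· + 1)).union hcfin)
    intro j hj
    simp only [Function.mem_support] at hj
    by_contra hc2
    simp only [Set.mem_union, Set.mem_image, Function.mem_support, not_or, not_exists,
      not_and] at hc2
    obtain ⟨h1, h2⟩ := hc2
    have ha0 : a (j - 1) = 0 := by
      by_contra hq
      exact h1 (j - 1) hq (by ring)
    have hc0 : c j = 0 := by simpa using h2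
    exact hj (by rw [ha0, hc0]; simp)
  have hsum_bound : Summable (fun j : ℤ => 2 * (a (j - 1)) ^ 2 + 2 * (c j) ^ 2) :=
    ((hsum_a2s.mul_left 2).add (hsum_c2.mul_left 2))
  -- main computation
  have step1 : ∑' j : ℤ, (s (j + 1) - 2 * s j + s (j - 1)) ^ 2
      = ∑' j : ℤ, (a (j - 1) - c j) ^ 2 := tsum_congr (fun j => by rw [hkey1 j])
  have step2 : ∑' j : ℤ, (a (j - 1) - c j) ^ 2
      ≤ ∑' j : ℤ, (2 * (a (j - 1)) ^ 2 + 2 * (c j) ^ 2) := by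
    apply Summable.tsum_le_tsum _ hsum_lhs hsum_bound
    intro j
    nlinarith [sq_nonneg (a (j - 1) + c j)]
  have step3 : ∑' j : ℤ, (2 * (a (j - 1)) ^ 2 + 2 * (c j) ^ 2)
      = 2 * ∑' j : ℤ, (a j) ^ 2 + 2 * ∑' j : ℤ, (c j) ^ 2 := by
    rw [Summable.tsum_add (hsum_a2s.mul_left 2) (hsum_c2.mul_left 2), tsum_mul_left, tsum_mul_left,
      sdm_shift_tsum (fun j => (a j) ^ 2)]
  have step4 : ∑' j : ℤ, (δ (j + 1) - 2 * δ j + δ (j - 1)) ^ 2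
      = ∑' j : ℤ, (a j) ^ 2 + ∑' j : ℤ, (c j) ^ 2 - 2 * ∑' j : ℤ, (a j * c j) := by
    have : ∀ j : ℤ, (δ (j + 1) - 2 * δ j + δ (j - 1)) ^ 2
        = (a j) ^ 2 + (c j) ^ 2 - 2 * (a j * c j) := by
      intro j; rw [hkey2 j]; ring
    rw [tsum_congr this, Summable.tsum_sub (hsum_a2.add hsum_c2) (hsum_ac.mul_left 2),
      Summable.tsum_add hsum_a2 hsum_c2, tsum_mul_left]
  have hX : ∑' j : ℤ, (a j * c j) ≤ 0 := tsum_nonpos hac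
  rw [step1, step4]
  calc ∑' j : ℤ, (a (j - 1) - c j) ^ 2
      ≤ ∑' j : ℤ, (2 * (a (j - 1)) ^ 2 + 2 * (c j) ^ 2) := step2
    _ = 2 * ∑' j : ℤ, (a j) ^ 2 + 2 * ∑' j : ℤ, (c j) ^ 2 := step3
    _ ≤ 2 * (∑' j : ℤ, (a j) ^ 2 + ∑' j : ℤ, (c j) ^ 2 - 2 * ∑' j : ℤ, (a j * c j)) := by
        linarith
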